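/- arXiv:2311.08436 — 2 statements merged into one kernel-verified Lean document; each statement's English description precedes it below -/
import Mathlib

section
/- For every n ≥ 1 and every subgraph Γ of X_n, there exists a coarse 1-wiring of Γ into Y with volume at most (2^{2^{2n+1}}·f(n)+1)·f(n), the number of vertices of Y_n. -/
open SimpleGraph

/-- A wiring of `G` into `H`: a map on vertices together with, for each edge
(given by an ordered adjacent pair, compatibly with reversal), a walk in `H`
joining the images of the endpoints. -/
structure Wiring {V : Type*} {W : Type*} (G : SimpleGraph V) (H : SimpleGraph W) where
  toFun : V → W
  walk : ∀ u v : V, G.Adj u v → H.Walk (toFun u) (toFun v)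
  walk_symm : ∀ (u v : V) (h : G.Adj u v), walk v u (G.adj_symm h) = (walk u v h).reverse

namespace Wiring

variable {V : Type*} {W : Type*} {G : SimpleGraph V} {H : SimpleGraph W}

/-- A wiring is a coarse `k`-wiring if the vertex map is at most `k`-to-one and
every edge of `H` lies on at most `k` of the chosen walks.  (Since walks are
indexed by *ordered* adjacent pairs, with the walk of `(v,u)` the reverse of the
walk of `(u,v)`, each edge of `G` is counted twice; hence the bound `2 * k`.) -/
def IsCoarse (Wr : Wiring G H) (k : ℕ) : Prop :=
  (∀ w : W, {v : V | Wr.toFun v = w}.ncard ≤ k) ∧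
  (∀ e : Sym2 W, e ∈ H.edgeSet →
    {p : V × V | ∃ h : G.Adj p.1 p.2, e ∈ (Wr.walk p.1 p.2 h).edges}.ncard ≤ 2 * k)

/-- The vertices of the image of a wiring. -/
def imageVerts (Wr : Wiring G H) : Set W :=
  Set.range Wr.toFun ∪ {w : W | ∃ (u v : V) (h : G.Adj u v), w ∈ (Wr.walk u v h).support}

/-- The volume of a wiring: the number of vertices of its image. -/
noncomputable def volume (Wr : Wiring G H) : ℕ := Wr.imageVerts.ncard

/-- The image of a wiring, as a subgraph of the target. -/
def imageSubgraph (Wr : Wiring G H) : H.Subgraph where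
  verts := Wr.imageVerts
  Adj w w' := ∃ (u v : V) (h : G.Adj u v), (Wr.walk u v h).toSubgraph.Adj w w'
  adj_sub := by
    rintro a b ⟨u, v, h, ha⟩
    exact (Wr.walk u v h).toSubgraph.adj_sub ha
  edge_vert := by
    rintro a b ⟨u, v, h, ha⟩
    refine Or.inr ⟨u, v, h, ?_⟩
    have := (Wr.walk u v h).toSubgraph.edge_vert ha
    rwa [SimpleGraph.Walk.verts_toSubgraph] at this
  symm := by
    refine ⟨?_⟩
    rintro a b ⟨u, v, h, ha⟩
    exact ⟨u, v, h, ha.symm⟩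

end Wiring

/-- `wir k G H` : the minimal volume of a coarse `k`-wiring of `G` into `H`
(`⊤` if there is none). -/
noncomputable def wir {V : Type*} {W : Type*} (k : ℕ)
    (G : SimpleGraph V) (H : SimpleGraph W) : ℕ∞ :=
  sInf {N : ℕ∞ | ∃ Wr : Wiring G H, Wr.IsCoarse k ∧ N = (Wr.volume : ℕ∞)}

/-- The `k`-wiring profile of `X` into `H`. -/
noncomputable def wirProfile {V : Type*} {W : Type*}
    (X : SimpleGraph V) (H : SimpleGraph W) (k n : ℕ) : ℕ∞ :=
  sSup {N : ℕ∞ | ∃ Γ : X.Subgraph, Γ.verts.Finite ∧ Γ.verts.ncard ≤ n ∧ N = wir k Γ.coe H}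

/-- One-directional adjacency generating the 2-dimensional integer grid. -/
def gridStep (p q : ℤ × ℤ) : Prop :=
  (p.1 = q.1 ∧ q.2 = p.2 + 1) ∨ (p.2 = q.2 ∧ q.1 = p.1 + 1)

/-- The 2-dimensional integer grid: vertices `ℤ²`, edges between points at distance 1. -/
def grid : SimpleGraph (ℤ × ℤ) where
  Adj p q := p ≠ q ∧ (gridStep p q ∨ gridStep q p)
  symm := ⟨fun p q h => ⟨h.1.symm, h.2.symm⟩⟩
  loopless := ⟨fun p h => h.1 rfl⟩

/-- One-directional adjacency for the column graphs: vertical steps everywhere,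
horizontal steps at heights divisible by `t`. -/
def colStep (t : ℕ) (p q : ℕ × ℕ) : Prop :=
  (p.1 = q.1 ∧ q.2 = p.2 + 1) ∨ (p.2 = q.2 ∧ t ∣ p.2 ∧ q.1 = p.1 + 1)

/-- Vertices of `X_n`. -/
def XVert (f : ℕ → ℕ) (n : ℕ) : Type :=
  {p : ℕ × ℕ // p.1 < f n ∧ p.2 ≤ 2 ^ 2 ^ (2 * n) * f n}

/-- The graph `X_n`. -/
def Xgraph (f : ℕ → ℕ) (n : ℕ) : SimpleGraph (XVert f n) where
  Adj u v := u ≠ v ∧ (colStep (2 ^ 2 ^ (2 * n)) u.val v.val ∨ colStep (2 ^ 2 ^ (2 * n)) v.val u.val)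
  symm := ⟨fun u v h => ⟨h.1.symm, h.2.symm⟩⟩
  loopless := ⟨fun u h => h.1 rfl⟩

/-- Vertices of `Y_n`. -/
def YVert (f : ℕ → ℕ) (n : ℕ) : Type :=
  {p : ℕ × ℕ // p.1 < f n ∧ p.2 ≤ 2 ^ 2 ^ (2 * n + 1) * f n}

/-- The graph `Y_n`. -/
def Ygraph (f : ℕ → ℕ) (n : ℕ) : SimpleGraph (YVert f n) where
  Adj u v := u ≠ v ∧
    (colStep (2 ^ 2 ^ (2 * n + 1)) u.val v.val ∨ colStep (2 ^ 2 ^ (2 * n + 1)) v.val u.val)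
  symm := ⟨fun u v h => ⟨h.1.symm, h.2.symm⟩⟩
  loopless := ⟨fun u h => h.1 rfl⟩

/-- Vertices of `X = ⨆ (n ≥ 1) X_n`: triples `(n, i, j)` with `(i,j)` a vertex of `X_n`. -/
def XTVert (f : ℕ → ℕ) : Type :=
  {p : ℕ × ℕ × ℕ // 1 ≤ p.1 ∧ p.2.1 < f p.1 ∧ p.2.2 ≤ 2 ^ 2 ^ (2 * p.1) * f p.1}

/-- The graph `X`, the disjoint union of the `X_n` for `n ≥ 1`. -/
def Xtotal (f : ℕ → ℕ) : SimpleGraph (XTVert f) where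
  Adj u v := u ≠ v ∧ u.val.1 = v.val.1 ∧
    (colStep (2 ^ 2 ^ (2 * u.val.1)) u.val.2 v.val.2 ∨
     colStep (2 ^ 2 ^ (2 * u.val.1)) v.val.2 u.val.2)
  symm := ⟨fun u v h => ⟨h.1.symm, h.2.1.symm, by rw [← h.2.1]; exact h.2.2.symm⟩⟩
  loopless := ⟨fun u h => h.1 rfl⟩

/-- Vertices of `Y = ⨆ (n ≥ 1) Y_n`. -/
def YTVert (f : ℕ → ℕ) : Type :=
  {p : ℕ × ℕ × ℕ // 1 ≤ p.1 ∧ p.2.1 < f p.1 ∧ p.2.2 ≤ 2 ^ 2 ^ (2 * p.1 + 1) * f p.1}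

/-- The graph `Y`, the disjoint union of the `Y_n` for `n ≥ 1`. -/
def Ytotal (f : ℕ → ℕ) : SimpleGraph (YTVert f) where
  Adj u v := u ≠ v ∧ u.val.1 = v.val.1 ∧
    (colStep (2 ^ 2 ^ (2 * u.val.1 + 1)) u.val.2 v.val.2 ∨
     colStep (2 ^ 2 ^ (2 * u.val.1 + 1)) v.val.2 u.val.2)
  symm := ⟨fun u v h => ⟨h.1.symm, h.2.1.symm, by rw [← h.2.1]; exact h.2.2.symm⟩⟩
  loopless := ⟨fun u h => h.1 rfl⟩

namespace S3Aux

lemma colStep_asymm {t : ℕ} {p q : ℕ × ℕ} (h1 : colStep t p q) (h2 : colStep t q p) : False := by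
  rcases h1 with ⟨_, h⟩ | ⟨_, _, h⟩ <;> rcases h2 with ⟨_, h'⟩ | ⟨_, _, h'⟩ <;> omega

instance {t : ℕ} {p q : ℕ × ℕ} : Decidable (colStep t p q) := by unfold colStep; infer_instance

variable (f : ℕ → ℕ) (n : ℕ)

lemma T_eq : (2:ℕ) ^ 2 ^ (2 * n + 1) = 2 ^ 2 ^ (2 * n) * 2 ^ 2 ^ (2 * n) := by
  rw [← pow_add]; congr 1; rw [pow_succ]; omega

def mkY (hn : 1 ≤ n) (i j : ℕ) (hi : i < f n) (hj : j ≤ 2 ^ 2 ^ (2 * n + 1) * f n) : YTVert f :=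
  ⟨(n, i, j), hn, hi, hj⟩

lemma adj_vert (hn : 1 ≤ n) (i j : ℕ) (hi : i < f n) (hj' : j + 1 ≤ 2 ^ 2 ^ (2 * n + 1) * f n) :
    (Ytotal f).Adj (mkY f n hn i j hi (by omega)) (mkY f n hn i (j + 1) hi hj') := by
  refine ⟨?_, rfl, Or.inl (Or.inl ⟨rfl, rfl⟩)⟩
  intro h
  have := congrArg (fun w : YTVert f => w.val.2.2) h
  simp [mkY] at this

def vertWalk (hn : 1 ≤ n) (i : ℕ) (hi : i < f n) :
    ∀ (a m : ℕ) (h : a + m ≤ 2 ^ 2 ^ (2 * n + 1) * f n),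
      (Ytotal f).Walk (mkY f n hn i a hi (by omega)) (mkY f n hn i (a + m) hi h)
  | _, 0, _ => Walk.nil
  | a, m + 1, h => (vertWalk hn i hi a m (by omega)).concat (adj_vert f n hn i (a + m) hi h)

lemma vertWalk_support (hn : 1 ≤ n) (i : ℕ) (hi : i < f n) :
    ∀ (a m : ℕ) (h : a + m ≤ 2 ^ 2 ^ (2 * n + 1) * f n) (w : YTVert f),
      w ∈ (vertWalk f n hn i hi a m h).support → w.val.1 = n
  | a, 0, h, w, hw => by
      rw [vertWalk] at hw
      simp [Walk.support_nil] at hw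
      subst hw; rfl
  | a, m + 1, h, w, hw => by
      rw [vertWalk, Walk.support_concat] at hw
      rcases (by simpa using hw : _ ∨ _) with hw | hw
      · exact vertWalk_support hn i hi a m _ w hw
      · subst hw; rfl

lemma vertWalk_edges (hn : 1 ≤ n) (i : ℕ) (hi : i < f n) :
    ∀ (a m : ℕ) (h : a + m ≤ 2 ^ 2 ^ (2 * n + 1) * f n) (e : Sym2 (YTVert f)),
      e ∈ (vertWalk f n hn i hi a m h).edges →
      ∃ r < m, Sym2.map Subtype.val e = s((n, i, a + r), (n, i, a + r + 1))
  | a, 0, h, e, he => by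
      rw [vertWalk] at he
      simp at he
  | a, m + 1, h, e, he => by
      rw [vertWalk, Walk.edges_concat] at he
      rcases (by simpa using he : _ ∨ _) with he | he
      · obtain ⟨r, hr, hr'⟩ := vertWalk_edges hn i hi a m _ e he
        exact ⟨r, by omega, hr'⟩
      · subst he
        exact ⟨m, by omega, rfl⟩


end S3Aux

namespace S3Aux

variable (f : ℕ → ℕ) (n : ℕ) (hn : 1 ≤ n) (Γ : (Xgraph f n).Subgraph)

lemma jbound {j : ℕ} (hj : j ≤ 2 ^ 2 ^ (2 * n) * f n) :
    j * 2 ^ 2 ^ (2 * n) ≤ 2 ^ 2 ^ (2 * n + 1) * f n := by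
  rw [T_eq]
  calc j * 2 ^ 2 ^ (2 * n) ≤ 2 ^ 2 ^ (2 * n) * f n * 2 ^ 2 ^ (2 * n) :=
        Nat.mul_le_mul_right _ hj
    _ = 2 ^ 2 ^ (2 * n) * 2 ^ 2 ^ (2 * n) * f n := by ring

def gmap (u : Γ.verts) : YTVert f :=
  mkY f n hn u.val.val.1 (u.val.val.2 * 2 ^ 2 ^ (2 * n)) u.val.prop.1 (jbound f n u.val.prop.2)

lemma gmap_inj : Function.Injective (gmap f n hn Γ) := by
  intro u v h
  have h' := congrArg Subtype.val h
  simp only [gmap, mkY, Prod.ext_iff] at h'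
  have h1 : u.val.val.1 = v.val.val.1 := h'.2.1
  have h2 : u.val.val.2 = v.val.val.2 :=
    Nat.eq_of_mul_eq_mul_right (by positivity) h'.2.2
  exact Subtype.ext (Subtype.ext (Prod.ext h1 h2))

lemma vert_facts {u v : Γ.verts} (hc : colStep (2 ^ 2 ^ (2 * n)) u.val.val v.val.val)
    (hcol : u.val.val.1 = v.val.val.1) : v.val.val.2 = u.val.val.2 + 1 := by
  rcases hc with ⟨_, h⟩ | ⟨_, _, h⟩ <;> omega

lemma horiz_facts {u v : Γ.verts} (hc : colStep (2 ^ 2 ^ (2 * n)) u.val.val v.val.val)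
    (hcol : ¬ u.val.val.1 = v.val.val.1) :
    u.val.val.2 = v.val.val.2 ∧ 2 ^ 2 ^ (2 * n) ∣ u.val.val.2 ∧ v.val.val.1 = u.val.val.1 + 1 := by
  rcases hc with ⟨h, _⟩ | h
  · exact absurd h hcol
  · exact h

def walkF (u v : Γ.verts) (hc : colStep (2 ^ 2 ^ (2 * n)) u.val.val v.val.val) :
    (Ytotal f).Walk (gmap f n hn Γ u) (gmap f n hn Γ v) :=
  if hcol : u.val.val.1 = v.val.val.1 then
    (vertWalk f n hn u.val.val.1 u.val.prop.1 (u.val.val.2 * 2 ^ 2 ^ (2 * n)) (2 ^ 2 ^ (2 * n))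
        (by
          have hb := jbound f n (show v.val.val.2 ≤ _ from v.val.prop.2)
          have hv := vert_facts f n Γ hc hcol
          have : u.val.val.2 * 2 ^ 2 ^ (2 * n) + 2 ^ 2 ^ (2 * n)
              = v.val.val.2 * 2 ^ 2 ^ (2 * n) := by rw [hv]; ring
          omega)).copy
      rfl
      (by
        apply Subtype.ext
        have hv := vert_facts f n Γ hc hcol
        simp only [mkY, gmap]
        rw [hcol, hv]
        simp [Prod.ext_iff]; ring)
  else
    Walk.cons
      (by
        obtain ⟨h2, hdvd, h1⟩ := horiz_facts f n Γ hc hcol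
        refine ⟨?_, rfl, Or.inl (Or.inr ⟨?_, ?_, ?_⟩)⟩
        · intro h
          have := congrArg (fun w : YTVert f => w.val.2.1) h
          simp only [gmap, mkY] at this
          exact hcol this
        · show u.val.val.2 * 2 ^ 2 ^ (2 * n) = v.val.val.2 * 2 ^ 2 ^ (2 * n)
          rw [h2]
        · show (2:ℕ) ^ 2 ^ (2 * n + 1) ∣ u.val.val.2 * 2 ^ 2 ^ (2 * n)
          rw [T_eq]
          obtain ⟨c, hc'⟩ := hdvd
          exact ⟨c, by rw [hc']; ring⟩
        · show v.val.val.1 = u.val.val.1 + 1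
          exact h1)
      Walk.nil

lemma walkF_support (u v : Γ.verts) (hc : colStep (2 ^ 2 ^ (2 * n)) u.val.val v.val.val)
    (w : YTVert f) (hw : w ∈ (walkF f n hn Γ u v hc).support) : w.val.1 = n := by
  unfold walkF at hw
  split at hw
  · replace hw := Eq.mp (congrArg (w ∈ ·) (Walk.support_copy _ _ _)) hw
    exact vertWalk_support f n hn _ _ _ _ _ w hw
  · simp only [Walk.support_cons, Walk.support_nil, List.mem_cons, List.mem_singleton,
      List.not_mem_nil, or_false] at hw
    rcases hw with hw | hw <;> (subst hw; rfl)

lemma walkF_edges (u v : Γ.verts) (hc : colStep (2 ^ 2 ^ (2 * n)) u.val.val v.val.val)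
    (e : Sym2 (YTVert f)) (he : e ∈ (walkF f n hn Γ u v hc).edges) :
    (u.val.val.1 = v.val.val.1 ∧ v.val.val.2 = u.val.val.2 + 1 ∧
      ∃ r < 2 ^ 2 ^ (2 * n), Sym2.map Subtype.val e =
        s((n, u.val.val.1, u.val.val.2 * 2 ^ 2 ^ (2 * n) + r),
          (n, u.val.val.1, u.val.val.2 * 2 ^ 2 ^ (2 * n) + r + 1)))
    ∨ (v.val.val.1 = u.val.val.1 + 1 ∧ v.val.val.2 = u.val.val.2 ∧
      Sym2.map Subtype.val e =
        s((n, u.val.val.1, u.val.val.2 * 2 ^ 2 ^ (2 * n)),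
          (n, u.val.val.1 + 1, u.val.val.2 * 2 ^ 2 ^ (2 * n)))) := by
  unfold walkF at he
  split at he
  · rename_i hcol
    replace he := Eq.mp (congrArg (e ∈ ·) (Walk.edges_copy _ _ _)) he
    obtain ⟨r, hr, hmap⟩ := vertWalk_edges f n hn _ _ _ _ _ e he
    exact Or.inl ⟨hcol, vert_facts f n Γ hc hcol, r, hr, hmap⟩
  · rename_i hcol
    obtain ⟨h2, hdvd, h1⟩ := horiz_facts f n Γ hc hcol
    simp only [Walk.edges_cons, Walk.edges_nil, List.mem_singleton] at he
    subst he
    refine Or.inr ⟨h1, h2.symm, ?_⟩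
    show s((gmap f n hn Γ u).val, (gmap f n hn Γ v).val) = _
    simp only [gmap, mkY]
    rw [h1, h2]

lemma mul_add_cancel_aux {t a b r r' : ℕ} (hr : r < t) (hr' : r' < t)
    (h : a * t + r = b * t + r') : a = b := by
  rcases Nat.lt_trichotomy a b with hab | hab | hab
  · exfalso
    have : (a + 1) * t ≤ b * t := Nat.mul_le_mul_right t hab
    nlinarith
  · exact hab
  · exfalso
    have : (b + 1) * t ≤ a * t := Nat.mul_le_mul_right t hab
    nlinarith

lemma walkF_unique {u v u' v' : Γ.verts}
    (hc : colStep (2 ^ 2 ^ (2 * n)) u.val.val v.val.val)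
    (hc' : colStep (2 ^ 2 ^ (2 * n)) u'.val.val v'.val.val)
    (e : Sym2 (YTVert f)) (he : e ∈ (walkF f n hn Γ u v hc).edges)
    (he' : e ∈ (walkF f n hn Γ u' v' hc').edges) : u = u' ∧ v = v' := by
  have ext2 : ∀ {x y : Γ.verts}, x.val.val.1 = y.val.val.1 → x.val.val.2 = y.val.val.2 → x = y :=
    fun h1 h2 => Subtype.ext (Subtype.ext (Prod.ext h1 h2))
  rcases walkF_edges f n hn Γ u v hc e he with ⟨hcol, hv2, r, hr, hmap⟩ | ⟨h1, h2, hmap⟩ <;>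
    rcases walkF_edges f n hn Γ u' v' hc' e he' with ⟨hcol', hv2', r', hr', hmap'⟩ | ⟨h1', h2', hmap'⟩
  · -- vertical / vertical
    have heq := hmap.symm.trans hmap'
    rw [Sym2.eq_iff] at heq
    simp only [Prod.ext_iff] at heq
    have hA : u.val.val.1 = u'.val.val.1 ∧ u.val.val.2 = u'.val.val.2 := by
      rcases heq with ⟨⟨_, hc1, hb1⟩, _⟩ | ⟨⟨_, _, hb1⟩, ⟨_, _, hb2⟩⟩
      · exact ⟨hc1, mul_add_cancel_aux hr hr' hb1⟩
      · omega
    refine ⟨ext2 hA.1 hA.2, ext2 ?_ ?_⟩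
    · rw [← hcol, ← hcol']; exact hA.1
    · omega
  · -- vertical / horizontal : impossible
    exfalso
    have heq := hmap.symm.trans hmap'
    rw [Sym2.eq_iff] at heq
    simp only [Prod.ext_iff] at heq
    omega
  · -- horizontal / vertical : impossible
    exfalso
    have heq := hmap.symm.trans hmap'
    rw [Sym2.eq_iff] at heq
    simp only [Prod.ext_iff] at heq
    omega
  · -- horizontal / horizontal
    have heq := hmap.symm.trans hmap'
    rw [Sym2.eq_iff] at heq
    simp only [Prod.ext_iff] at heq
    have hA : u.val.val.1 = u'.val.val.1 ∧
        u.val.val.2 * 2 ^ 2 ^ (2 * n) = u'.val.val.2 * 2 ^ 2 ^ (2 * n) := by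
      rcases heq with ⟨⟨_, hc1, hb1⟩, _⟩ | ⟨⟨_, hc1, _⟩, ⟨_, hc2, _⟩⟩
      · exact ⟨hc1, hb1⟩
      · omega
    have h2eq : u.val.val.2 = u'.val.val.2 :=
      Nat.eq_of_mul_eq_mul_right (by positivity) hA.2
    exact ⟨ext2 hA.1 h2eq, ext2 (by omega) (by omega)⟩

lemma level_bound :
    ({w : YTVert f | w.val.1 = n}).Finite ∧
    ({w : YTVert f | w.val.1 = n}).ncard ≤ (2 ^ 2 ^ (2 * n + 1) * f n + 1) * f n := by
  classical
  set L := {w : YTVert f | w.val.1 = n} with hL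
  have hφ : ∃ φ : ↥L → Fin (f n) × Fin (2 ^ 2 ^ (2 * n + 1) * f n + 1), Function.Injective φ := by
    refine ⟨fun w => (⟨w.val.val.2.1, ?_⟩, ⟨w.val.val.2.2, ?_⟩), ?_⟩
    · have h := w.val.prop.2.1
      have h2 : w.val.val.1 = n := w.prop
      rwa [h2] at h
    · have h := w.val.prop.2.2
      have h2 : w.val.val.1 = n := w.prop
      rw [h2] at h
      omega
    · intro a b h
      simp only [Prod.mk.injEq, Fin.mk.injEq] at h
      have e1 : a.val.val.1 = b.val.val.1 := by
        have ha : a.val.val.1 = n := a.prop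
        have hb : b.val.val.1 = n := b.prop
        rw [ha, hb]
      exact Subtype.ext (Subtype.ext (Prod.ext e1 (Prod.ext h.1 h.2)))
  obtain ⟨φ, hφinj⟩ := hφ
  have hfinL : Finite ↥L := Finite.of_injective φ hφinj
  have hfin : L.Finite := Set.finite_coe_iff.mp hfinL
  refine ⟨hfin, ?_⟩
  have h1 : L.ncard = Nat.card ↥L := (Nat.card_coe_set_eq L).symm
  have h2 : Nat.card ↥L ≤ Nat.card (Fin (f n) × Fin (2 ^ 2 ^ (2 * n + 1) * f n + 1)) :=
    Nat.card_le_card_of_injective φ hφinj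
  have h3 : Nat.card (Fin (f n) × Fin (2 ^ 2 ^ (2 * n + 1) * f n + 1))
      = f n * (2 ^ 2 ^ (2 * n + 1) * f n + 1) := by
    simp [Nat.card_eq_fintype_card]
  rw [h1]
  calc Nat.card ↥L ≤ _ := h2
    _ = f n * (2 ^ 2 ^ (2 * n + 1) * f n + 1) := h3
    _ = (2 ^ 2 ^ (2 * n + 1) * f n + 1) * f n := Nat.mul_comm _ _

def theWalk (u v : Γ.verts) (h : Γ.coe.Adj u v) :
    (Ytotal f).Walk (gmap f n hn Γ u) (gmap f n hn Γ v) :=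
  if hc : colStep (2 ^ 2 ^ (2 * n)) u.val.val v.val.val then walkF f n hn Γ u v hc
  else (walkF f n hn Γ v u ((Γ.adj_sub h).2.resolve_left hc)).reverse

lemma theWalk_symm (u v : Γ.verts) (h : Γ.coe.Adj u v) :
    theWalk f n hn Γ v u (Γ.coe.adj_symm h) = (theWalk f n hn Γ u v h).reverse := by
  unfold theWalk
  by_cases hc : colStep (2 ^ 2 ^ (2 * n)) u.val.val v.val.val
  · rw [dif_pos hc, dif_neg (fun hc' => colStep_asymm hc' hc)]
  · rw [dif_neg hc, dif_pos ((Γ.adj_sub h).2.resolve_left hc), Walk.reverse_reverse]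

lemma theWalk_edges (u v : Γ.verts) (h : Γ.coe.Adj u v) (e : Sym2 (YTVert f))
    (he : e ∈ (theWalk f n hn Γ u v h).edges) :
    (∃ hc : colStep (2 ^ 2 ^ (2 * n)) u.val.val v.val.val,
        e ∈ (walkF f n hn Γ u v hc).edges) ∨
    (∃ hc : colStep (2 ^ 2 ^ (2 * n)) v.val.val u.val.val,
        e ∈ (walkF f n hn Γ v u hc).edges) := by
  unfold theWalk at he
  split at he
  · exact Or.inl ⟨_, he⟩
  · rw [Walk.edges_reverse, List.mem_reverse] at he
    exact Or.inr ⟨_, he⟩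

lemma theWalk_support (u v : Γ.verts) (h : Γ.coe.Adj u v) (w : YTVert f)
    (hw : w ∈ (theWalk f n hn Γ u v h).support) : w.val.1 = n := by
  unfold theWalk at hw
  split at hw
  · exact walkF_support f n hn Γ u v _ w hw
  · rw [Walk.support_reverse, List.mem_reverse] at hw
    exact walkF_support f n hn Γ v u _ w hw

end S3Aux



open S3Aux in
/-- For every `n ≥ 1`, every subgraph of `X_n` admits a coarse
`1`-wiring into `Y` of volume at most `(2^(2^(2n+1))·f n + 1)·f n = |Y_n|`. -/
theorem statement3
    (f : ℕ → ℕ)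
    (hsurj : ∀ k, 1 ≤ k → ∃ n, 1 ≤ n ∧ f n = k)
    (hf1 : f 1 = 1)
    (hf : ∀ n, 2 ≤ n → 2 ≤ f n ∧ f n ≤ n)
    (hinf : ∀ k, 2 ≤ k → {n | f n = k}.Infinite)
    (n : ℕ) (hn : 1 ≤ n) (Γ : (Xgraph f n).Subgraph) :
    ∃ Wr : Wiring Γ.coe (Ytotal f), Wr.IsCoarse 1 ∧
      Wr.volume ≤ (2 ^ 2 ^ (2 * n + 1) * f n + 1) * f n := by
  refine ⟨⟨gmap f n hn Γ, theWalk f n hn Γ, theWalk_symm f n hn Γ⟩, ⟨?_, ?_⟩, ?_⟩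
  · -- vertex condition
    intro w
    rcases Set.eq_empty_or_nonempty {v : Γ.verts | gmap f n hn Γ v = w} with hS | ⟨a, ha⟩
    · simp [hS]
    · have hsub : {v : Γ.verts | gmap f n hn Γ v = w} ⊆ {a} := by
        intro x hx
        exact gmap_inj f n hn Γ (hx.trans ha.symm)
      calc {v : Γ.verts | gmap f n hn Γ v = w}.ncard ≤ ({a} : Set Γ.verts).ncard :=
            Set.ncard_le_ncard hsub (Set.finite_singleton a)
        _ = 1 := Set.ncard_singleton a
  · -- edge condition
    intro e _
    set S := {p : Γ.verts × Γ.verts | ∃ h : Γ.coe.Adj p.1 p.2,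
        e ∈ ((⟨gmap f n hn Γ, theWalk f n hn Γ, theWalk_symm f n hn Γ⟩ :
          Wiring Γ.coe (Ytotal f)).walk p.1 p.2 h).edges} with hSdef
    have hkey : ∀ p ∈ S, ∀ q ∈ S, q = p ∨ q = (p.2, p.1) := by
      rintro ⟨a, b⟩ ⟨hab, he⟩ ⟨c, d⟩ ⟨hcd, he'⟩
      rcases theWalk_edges f n hn Γ a b hab e he with ⟨hc1, hw1⟩ | ⟨hc1, hw1⟩ <;>
        rcases theWalk_edges f n hn Γ c d hcd e he' with ⟨hc2, hw2⟩ | ⟨hc2, hw2⟩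
      · obtain ⟨h1, h2⟩ := walkF_unique f n hn Γ hc2 hc1 e hw2 hw1
        exact Or.inl (by simp [h1, h2])
      · obtain ⟨h1, h2⟩ := walkF_unique f n hn Γ hc2 hc1 e hw2 hw1
        exact Or.inr (by simp [h1, h2])
      · obtain ⟨h1, h2⟩ := walkF_unique f n hn Γ hc2 hc1 e hw2 hw1
        exact Or.inr (by simp [h1, h2])
      · obtain ⟨h1, h2⟩ := walkF_unique f n hn Γ hc2 hc1 e hw2 hw1
        exact Or.inl (by simp [h1, h2])
    rcases Set.eq_empty_or_nonempty S with hS | ⟨p, hp⟩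
    · simp [hS]
    · have hsub : S ⊆ {p, (p.2, p.1)} := fun q hq => hkey p hp q hq
      calc S.ncard ≤ ({p, (p.2, p.1)} : Set (Γ.verts × Γ.verts)).ncard :=
            Set.ncard_le_ncard hsub (Set.toFinite _)
        _ ≤ 2 := by
            refine (Set.ncard_insert_le _ _).trans ?_
            simp [Set.ncard_singleton]
  · -- volume
    have hlevel : (⟨gmap f n hn Γ, theWalk f n hn Γ, theWalk_symm f n hn Γ⟩ :
        Wiring Γ.coe (Ytotal f)).imageVerts ⊆ {w : YTVert f | w.val.1 = n} := by
      rintro w (⟨u, rfl⟩ | ⟨u, v, h, hw⟩)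
      · rfl
      · exact theWalk_support f n hn Γ u v h w hw
    obtain ⟨hfin, hcard⟩ := level_bound f n
    calc _ ≤ ({w : YTVert f | w.val.1 = n}).ncard := Set.ncard_le_ncard hlevel hfin
      _ ≤ _ := hcard
end

section
/- For every m ≥ 1, every subgraph of Y_m with fewer than 2·2^{2^{2m+1}} + 2 vertices is acyclic (contains no cycle). -/
open SimpleGraph

private lemma s9_exists_max (n : ℕ) (hn : 0 < n) (g : ℕ → ℕ) :
    ∃ K, K < n ∧ ∀ j, j < n → g j ≤ g K := by
  obtain ⟨K, hK, hmax⟩ := Finset.exists_max_image (Finset.range n) g ⟨0, Finset.mem_range.2 hn⟩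
  exact ⟨K, Finset.mem_range.1 hK, fun j hj => hmax j (Finset.mem_range.2 hj)⟩

private lemma s9_cross_up (J : ℕ → ℕ) (ℓ a b : ℕ) (hab : a ≤ b)
    (hstep : ∀ k, a ≤ k → k < b → J (k+1) ≤ J k + 1)
    (ha : J a < ℓ) (hb : ℓ ≤ J b) :
    ∃ k, a ≤ k ∧ k < b ∧ J k < ℓ ∧ ℓ ≤ J (k+1) := by
  by_contra hcon
  push_neg at hcon
  have key : ∀ k, a ≤ k → k ≤ b → J k < ℓ := by
    intro k hk
    induction k, hk using Nat.le_induction with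
    | base => intro _; exact ha
    | succ k hk ih =>
      intro hkb
      have hk' : k < b := by omega
      have h1 := hcon k hk hk' (ih (by omega))
      have h2 := hstep k hk hk'
      omega
  have := key b hab le_rfl
  omega

private lemma s9_cross_down (J : ℕ → ℕ) (ℓ a b : ℕ) (hab : a ≤ b)
    (hstep : ∀ k, a ≤ k → k < b → J k ≤ J (k+1) + 1)
    (ha : ℓ ≤ J a) (hb : J b < ℓ) :
    ∃ k, a ≤ k ∧ k < b ∧ ℓ ≤ J k ∧ J (k+1) < ℓ := by
  by_contra hcon
  push_neg at hcon
  have key : ∀ k, a ≤ k → k ≤ b → ℓ ≤ J k := by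
    intro k hk
    induction k, hk using Nat.le_induction with
    | base => intro _; exact ha
    | succ k hk ih =>
      intro hkb
      have hk' : k < b := by omega
      have h1 := hcon k hk hk' (ih (by omega))
      have h2 := hstep k hk hk'
      omega
  have := key b hab le_rfl
  omega

private lemma s9_gvs {V : Type*} {G : SimpleGraph V} {u w : V} (c : G.Walk u w) :
    ∀ (k : ℕ) (hk : k < c.support.length), c.getVert k = c.support[k] := by
  induction c with
  | nil =>
    intro k hk
    simp only [SimpleGraph.Walk.support_nil, List.length_singleton] at hk
    interval_cases k
    simp [SimpleGraph.Walk.support_nil, SimpleGraph.Walk.getVert_zero]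
  | cons h q ih =>
    intro k hk
    cases k with
    | zero => simp [SimpleGraph.Walk.support_cons, SimpleGraph.Walk.getVert_zero]
    | succ k =>
      simp only [SimpleGraph.Walk.getVert_cons_succ, SimpleGraph.Walk.support_cons,
        List.getElem_cons_succ]
      exact ih k (by simpa [SimpleGraph.Walk.support_cons] using hk)

private lemma s9_inj {V : Type*} {G : SimpleGraph V} {u : V} {c : G.Walk u u}
    (hc : c.IsCycle) : ∀ a b, a < c.length → b < c.length →
      c.getVert a = c.getVert b → a = b := by
  have hnd := hc.support_nodup
  have hsl : c.support.length = c.length + 1 := c.length_support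
  have htl : c.support.tail.length = c.length := by simp [List.length_tail, hsl]
  have key : ∀ i (h : i < c.support.tail.length), c.support.tail[i] = c.getVert (i+1) := by
    intro i h
    have h' : i + 1 < c.support.length := by omega
    have h2 := List.get_tail c.support i h h'
    simp only [List.get_eq_getElem] at h2
    rw [h2, ← s9_gvs c (i+1) h']
  have main : ∀ x y, 1 ≤ x → x ≤ c.length → 1 ≤ y → y ≤ c.length →
      c.getVert x = c.getVert y → x = y := by
    intro x y hx1 hx2 hy1 hy2 hxy
    have hix : x - 1 < c.support.tail.length := by omega
    have hiy : y - 1 < c.support.tail.length := by omega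
    have e1 := key (x-1) hix
    have e2 := key (y-1) hiy
    have hx' : x - 1 + 1 = x := by omega
    have hy' : y - 1 + 1 = y := by omega
    rw [hx'] at e1
    rw [hy'] at e2
    have : c.support.tail[x-1]'hix = c.support.tail[y-1]'hiy := by rw [e1, e2, hxy]
    have := hnd.getElem_inj_iff.mp this
    omega
  intro a b ha hb hab
  rcases Nat.eq_zero_or_pos a with rfl | hapos <;> rcases Nat.eq_zero_or_pos b with rfl | hbpos
  · rfl
  · have h0 : c.getVert c.length = c.getVert b :=
      (c.getVert_length).trans ((c.getVert_zero).symm.trans hab)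
    have := main c.length b (by omega) le_rfl hbpos (by omega) h0
    omega
  · have h0 : c.getVert a = c.getVert c.length :=
      hab.trans ((c.getVert_zero).trans (c.getVert_length).symm)
    have := main a c.length hapos (by omega) (by omega) le_rfl h0
    omega
  · exact main a b hapos (by omega) hbpos (by omega) hab

private lemma s9_step {T : ℕ} {a b : ℕ × ℕ} (h : colStep T a b ∨ colStep T b a) :
    (b.1 = a.1 ∧ (b.2 = a.2 + 1 ∨ a.2 = b.2 + 1)) ∨
    (b.2 = a.2 ∧ T ∣ a.2 ∧ (b.1 = a.1 + 1 ∨ a.1 = b.1 + 1)) := by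
  unfold colStep at h
  rcases h with (⟨h1, h2⟩ | ⟨h1, h2, h3⟩) | (⟨h1, h2⟩ | ⟨h1, h2, h3⟩)
  · exact Or.inl ⟨h1.symm, Or.inl h2⟩
  · exact Or.inr ⟨h1.symm, h2, Or.inl h3⟩
  · exact Or.inl ⟨h1, Or.inr h2⟩
  · exact Or.inr ⟨h1, by rwa [h1] at h2, Or.inr h3⟩

private lemma s9_nbr (n K : ℕ) (h3 : 3 ≤ n) (hK : K < n) (I J : ℕ → ℕ)
    (hIc : I n = I 0) (hJc : J n = J 0) :
    ∃ p b, p < n ∧ b < n ∧ p ≠ b ∧ I (p+1) = I K ∧ J (p+1) = J K ∧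
      I b = I (K+1) ∧ J b = J (K+1) := by
  refine ⟨if K = 0 then n - 1 else K - 1, if K + 1 = n then 0 else K + 1,
    ?_, ?_, ?_, ?_, ?_, ?_, ?_⟩
  · split <;> omega
  · split <;> omega
  · split_ifs <;> omega
  · split_ifs with h
    · rw [show n - 1 + 1 = n by omega, hIc, h]
    · rw [show K - 1 + 1 = K by omega]
  · split_ifs with h
    · rw [show n - 1 + 1 = n by omega, hJc, h]
    · rw [show K - 1 + 1 = K by omega]
  · split_ifs with h
    · rw [← h] at hIc; rw [hIc]
    · rfl
  · split_ifs with h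
    · rw [← h] at hJc; rw [hJc]
    · rfl

private lemma s9_peak (n : ℕ) (h3 : 3 ≤ n) (I J : ℕ → ℕ) (js : ℕ)
    (hIc : I n = I 0) (hJc : J n = J 0)
    (hstep : ∀ k, k < n →
      (I (k+1) = I k ∧ (J (k+1) = J k + 1 ∨ J k = J (k+1) + 1)) ∨
      (J (k+1) = J k ∧ J k = js ∧ (I (k+1) = I k + 1 ∨ I k = I (k+1) + 1)))
    (hinj : ∀ a b, a < n → b < n → I a = I b → J a = J b → a = b) : False := by
  by_cases hM : ∀ k, k ≤ n → J k = js
  · have hrow : ∀ k, k < n → I (k+1) = I k + 1 ∨ I k = I (k+1) + 1 := by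
      intro k hk
      rcases hstep k hk with ⟨_, h⟩ | ⟨_, _, h⟩
      · have e1 := hM k (by omega); have e2 := hM (k+1) (by omega); omega
      · exact h
    obtain ⟨K, hK, hmax⟩ := s9_exists_max n (by omega) I
    obtain ⟨p, b, hp, hb, hpb, hIp1, hJp1, hIb, hJb⟩ := s9_nbr n K h3 hK I J hIc hJc
    have h1 := hrow p hp
    have h2 := hrow K hK
    have hup := hmax p hp
    have hub := hmax b hb
    apply hpb
    apply hinj p b hp hb
    · omega
    · have e1 := hM p (by omega); have e2 := hM b (by omega); omega
  · push_neg at hM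
    obtain ⟨k0, hk0n, hk0⟩ := hM
    obtain ⟨K0, hK0n, hK0⟩ : ∃ k, k < n ∧ J k ≠ js := by
      rcases Nat.lt_or_ge k0 n with h | h
      · exact ⟨k0, h, hk0⟩
      · have he : k0 = n := by omega
        exact ⟨0, by omega, by rw [← hJc, ← he]; exact hk0⟩
    obtain ⟨K, hK, hmax⟩ := s9_exists_max n (by omega) (fun k => (J k - js) + (js - J k))
    have hd0 : (J K0 - js) + (js - J K0) ≤ (J K - js) + (js - J K) := hmax K0 hK0n
    have hMpos : J K ≠ js := by intro h; rw [h] at hd0; omega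
    obtain ⟨p, b, hp, hb, hpb, hIp1, hJp1, hIb, hJb⟩ := s9_nbr n K h3 hK I J hIc hJc
    have hvp : I (p+1) = I p ∧ (J (p+1) = J p + 1 ∨ J p = J (p+1) + 1) := by
      rcases hstep p hp with h | ⟨h1, h2, _⟩
      · exact h
      · exact absurd (by rw [← hJp1, h1, h2]) hMpos
    have hvK : I (K+1) = I K ∧ (J (K+1) = J K + 1 ∨ J K = J (K+1) + 1) := by
      rcases hstep K hK with h | ⟨_, h2, _⟩
      · exact h
      · exact absurd h2 hMpos
    have hdp : (J p - js) + (js - J p) ≤ (J K - js) + (js - J K) := hmax p hp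
    have hdb : (J b - js) + (js - J b) ≤ (J K - js) + (js - J K) := hmax b hb
    obtain ⟨hvp1, hvp2⟩ := hvp
    obtain ⟨hvK1, hvK2⟩ := hvK
    apply hpb
    apply hinj p b hp hb
    · omega
    · rcases hvp2 with h | h <;> rcases hvK2 with h' | h' <;> omega

/-- For `m ≥ 1`, every subgraph of `Y_m` with fewer than
`2 · 2^(2^(2m+1)) + 2` vertices contains no cycle. -/
theorem statement9
    (f : ℕ → ℕ)
    (hsurj : ∀ k, 1 ≤ k → ∃ n, 1 ≤ n ∧ f n = k)
    (hf1 : f 1 = 1)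
    (hf : ∀ n, 2 ≤ n → 2 ≤ f n ∧ f n ≤ n)
    (hinf : ∀ k, 2 ≤ k → {n | f n = k}.Infinite)
    (m : ℕ) (hm : 1 ≤ m)
    (Γ : (Ygraph f m).Subgraph)
    (hΓ : Γ.verts.ncard < 2 * 2 ^ 2 ^ (2 * m + 1) + 2) :
    ∀ (v : Γ.verts) (c : Γ.coe.Walk v v), ¬ c.IsCycle := by

  intro v c hc
  classical
  -- abbreviations
  have h3 : 3 ≤ c.length := hc.three_le_length
  set n := c.length with hn
  set T := 2 ^ 2 ^ (2 * m + 1) with hT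
  -- coordinate functions
  obtain ⟨I, J, hIdef, hJdef⟩ :
      ∃ I J : ℕ → ℕ,
        (∀ k, I k = (Subtype.val (Subtype.val (c.getVert k))).1) ∧
        (∀ k, J k = (Subtype.val (Subtype.val (c.getVert k))).2) :=
    ⟨_, _, fun _ => rfl, fun _ => rfl⟩
  -- closedness
  have h0 : c.getVert n = c.getVert 0 := by
    rw [hn, SimpleGraph.Walk.getVert_length, SimpleGraph.Walk.getVert_zero]
  have hIc : I n = I 0 := by rw [hIdef, hIdef, h0]
  have hJc : J n = J 0 := by rw [hJdef, hJdef, h0]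
  -- step dichotomy
  have hstep : ∀ k, k < n →
      (I (k+1) = I k ∧ (J (k+1) = J k + 1 ∨ J k = J (k+1) + 1)) ∨
      (J (k+1) = J k ∧ T ∣ J k ∧ (I (k+1) = I k + 1 ∨ I k = I (k+1) + 1)) := by
    intro k hk
    have hadj : Γ.coe.Adj (c.getVert k) (c.getVert (k+1)) := c.adj_getVert_succ hk
    have hadj' : (Ygraph f m).Adj (Subtype.val (c.getVert k))
        (Subtype.val (c.getVert (k+1))) := Γ.adj_sub hadj
    have h2 : colStep T (Subtype.val (Subtype.val (c.getVert k)))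
          (Subtype.val (Subtype.val (c.getVert (k+1)))) ∨
        colStep T (Subtype.val (Subtype.val (c.getVert (k+1))))
          (Subtype.val (Subtype.val (c.getVert k))) := by obtain ⟨_, h⟩ := hadj'; exact h
    simp only [hIdef, hJdef]
    exact s9_step h2
  -- injectivity of coordinates
  have hinj : ∀ a b, a < n → b < n → I a = I b → J a = J b → a = b := by
    intro a b ha hb h1 h2
    apply s9_inj hc a b ha hb
    apply Subtype.ext
    apply Subtype.ext
    simp only [hIdef, hJdef] at h1 h2
    exact Prod.ext h1 h2
  -- cardinality upper bound
  haveI hYfin : Finite (YVert f m) := by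
    have hfin : ({p : ℕ × ℕ | p.1 < f m ∧ p.2 ≤ 2 ^ 2 ^ (2*m+1) * f m}).Finite :=
      ((Set.finite_Iio (f m)).prod (Set.finite_Iic (2 ^ 2 ^ (2*m+1) * f m))).subset
        (fun p hp => Set.mk_mem_prod hp.1 hp.2)
    exact hfin.to_subtype
  have hcardn : n ≤ Γ.verts.ncard := by
    haveI := Fintype.ofFinite ↥Γ.verts
    have h1 : c.support.tail.length ≤ Fintype.card ↥Γ.verts :=
      hc.support_nodup.length_le_card
    have h2 : c.support.tail.length = n := by
      have := c.length_support
      simp [List.length_tail, this, hn]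
    rw [Set.ncard_eq_toFinset_card', Set.toFinset_card]
    omega
  -- step bounds
  have hup : ∀ k, k < n → J (k+1) ≤ J k + 1 := by
    intro k hk
    rcases hstep k hk with ⟨_, h | h⟩ | ⟨h, _, _⟩ <;> omega
  have hdn : ∀ k, k < n → J k ≤ J (k+1) + 1 := by
    intro k hk
    rcases hstep k hk with ⟨_, h | h⟩ | ⟨h, _, _⟩ <;> omega
  by_cases hA : ∃ a, a < n ∧ ∃ b, b < n ∧ J (a+1) = J a ∧ J (b+1) = J b ∧ J a < J b
  · -- two horizontal edges at different heights: counting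
    obtain ⟨a, han, b, hbn, hha, hhb, hlt⟩ := hA
    have hdvd : ∀ k, k < n → J (k+1) = J k → T ∣ J k := by
      intro k hk he
      rcases hstep k hk with ⟨_, h | h⟩ | ⟨_, hd, _⟩
      · omega
      · omega
      · exact hd
    have hTa := hdvd a han hha
    have hTb := hdvd b hbn hhb
    have hTle : J a + T ≤ J b := by
      have h1 : T ∣ (J b - J a) := Nat.dvd_sub hTb hTa
      have h2 : 0 < J b - J a := by omega
      have := Nat.le_of_dvd h2 h1
      omega
    -- up-crossings
    have hupc : ∀ ℓ, ∃ k, J a < ℓ → ℓ ≤ J b → k < n ∧ J k + 1 = ℓ ∧ J (k+1) = ℓ := by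
      intro ℓ
      by_cases hl : J a < ℓ ∧ ℓ ≤ J b
      · have hex : ∃ k, k < n ∧ J k < ℓ ∧ ℓ ≤ J (k+1) := by
          rcases le_or_gt a b with hab | hab
          · obtain ⟨k, _, hk2, hk3, hk4⟩ :=
              s9_cross_up J ℓ a b hab (fun k _ h2 => hup k (by omega)) (by omega) (by omega)
            exact ⟨k, by omega, hk3, hk4⟩
          · rcases le_or_gt ℓ (J 0) with h00 | h00
            · obtain ⟨k, _, hk2, hk3, hk4⟩ :=
                s9_cross_up J ℓ a n (by omega) (fun k _ h2 => hup k h2) (by omega) (by omega)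
              exact ⟨k, hk2, hk3, hk4⟩
            · obtain ⟨k, _, hk2, hk3, hk4⟩ :=
                s9_cross_up J ℓ 0 b (by omega) (fun k _ h2 => hup k (by omega)) (by omega)
                  (by omega)
              exact ⟨k, by omega, hk3, hk4⟩
        obtain ⟨k, hk, hk1, hk2⟩ := hex
        have h4 := hup k hk
        exact ⟨k, fun _ _ => ⟨hk, by omega, by omega⟩⟩
      · exact ⟨0, fun hh1 hh2 => absurd ⟨hh1, hh2⟩ hl⟩
    -- down-crossings
    have hdnc : ∀ ℓ, ∃ k, J a < ℓ → ℓ ≤ J b → k < n ∧ J k = ℓ ∧ J (k+1) + 1 = ℓ := by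
      intro ℓ
      by_cases hl : J a < ℓ ∧ ℓ ≤ J b
      · have hex : ∃ k, k < n ∧ ℓ ≤ J k ∧ J (k+1) < ℓ := by
          rcases le_or_gt b a with hab | hab
          · obtain ⟨k, _, hk2, hk3, hk4⟩ :=
              s9_cross_down J ℓ b a hab (fun k _ h2 => hdn k (by omega)) (by omega) (by omega)
            exact ⟨k, by omega, hk3, hk4⟩
          · rcases le_or_gt ℓ (J 0) with h00 | h00
            · obtain ⟨k, _, hk2, hk3, hk4⟩ :=
                s9_cross_down J ℓ 0 a (by omega) (fun k _ h2 => hdn k (by omega)) (by omega)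
                  (by omega)
              exact ⟨k, by omega, hk3, hk4⟩
            · obtain ⟨k, _, hk2, hk3, hk4⟩ :=
                s9_cross_down J ℓ b n (by omega) (fun k _ h2 => hdn k h2) (by omega) (by omega)
              exact ⟨k, hk2, hk3, hk4⟩
        obtain ⟨k, hk, hk1, hk2⟩ := hex
        have h4 := hdn k hk
        exact ⟨k, fun _ _ => ⟨hk, by omega, by omega⟩⟩
      · exact ⟨0, fun hh1 hh2 => absurd ⟨hh1, hh2⟩ hl⟩
    choose uk huk using hupc
    choose dk hdk using hdnc
    set S1 := (Finset.Ioc (J a) (J b)).image uk with hS1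
    set S2 := (Finset.Ioc (J a) (J b)).image dk with hS2
    have hS1c : S1.card = J b - J a := by
      rw [hS1, Finset.card_image_of_injOn, Nat.card_Ioc]
      intro x hx y hy hxy
      simp only [Finset.coe_Ioc, Set.mem_Ioc] at hx hy
      obtain ⟨_, hx2, hx3⟩ := huk x hx.1 hx.2
      obtain ⟨_, hy2, hy3⟩ := huk y hy.1 hy.2
      rw [hxy] at hx2
      omega
    have hS2c : S2.card = J b - J a := by
      rw [hS2, Finset.card_image_of_injOn, Nat.card_Ioc]
      intro x hx y hy hxy
      simp only [Finset.coe_Ioc, Set.mem_Ioc] at hx hy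
      obtain ⟨_, hx2, hx3⟩ := hdk x hx.1 hx.2
      obtain ⟨_, hy2, hy3⟩ := hdk y hy.1 hy.2
      rw [hxy] at hx2
      omega
    have hdisj : Disjoint S1 S2 := by
      rw [Finset.disjoint_left]
      intro k hk1 hk2
      rw [hS1, Finset.mem_image] at hk1
      rw [hS2, Finset.mem_image] at hk2
      obtain ⟨x, hx, hxe⟩ := hk1
      obtain ⟨y, hy, hye⟩ := hk2
      rw [Finset.mem_Ioc] at hx hy
      obtain ⟨_, hx2, hx3⟩ := huk x hx.1 hx.2
      obtain ⟨_, hy2, hy3⟩ := hdk y hy.1 hy.2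
      rw [hxe] at hx2 hx3
      rw [hye] at hy2 hy3
      omega
    have hmemab : ∀ k ∈ S1 ∪ S2, J (k+1) ≠ J k := by
      intro k hk
      rw [Finset.mem_union, hS1, hS2, Finset.mem_image, Finset.mem_image] at hk
      rcases hk with ⟨x, hx, hxe⟩ | ⟨x, hx, hxe⟩ <;> rw [Finset.mem_Ioc] at hx
      · obtain ⟨_, hx2, hx3⟩ := huk x hx.1 hx.2
        rw [hxe] at hx2 hx3
        omega
      · obtain ⟨_, hx2, hx3⟩ := hdk x hx.1 hx.2
        rw [hxe] at hx2 hx3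
        omega
    have hdisj2 : Disjoint (S1 ∪ S2) ({a, b} : Finset ℕ) := by
      rw [Finset.disjoint_right]
      intro k hk
      rw [Finset.mem_insert, Finset.mem_singleton] at hk
      intro hmem
      rcases hk with rfl | rfl
      · exact hmemab k hmem hha
      · exact hmemab k hmem hhb
    have hsub : S1 ∪ S2 ∪ ({a, b} : Finset ℕ) ⊆ Finset.range n := by
      intro k hk
      rw [Finset.mem_union, Finset.mem_union, hS1, hS2, Finset.mem_image,
        Finset.mem_image, Finset.mem_insert, Finset.mem_singleton] at hk
      rw [Finset.mem_range]
      rcases hk with (⟨x, hx, hxe⟩ | ⟨x, hx, hxe⟩) | rfl | rfl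
      · rw [Finset.mem_Ioc] at hx
        obtain ⟨h1, _, _⟩ := huk x hx.1 hx.2
        omega
      · rw [Finset.mem_Ioc] at hx
        obtain ⟨h1, _, _⟩ := hdk x hx.1 hx.2
        omega
      · exact han
      · exact hbn
    have habne : a ≠ b := fun h => by rw [h] at hlt; omega
    have hcard2 : (S1 ∪ S2 ∪ ({a, b} : Finset ℕ)).card = (J b - J a) + (J b - J a) + 2 := by
      rw [Finset.card_union_of_disjoint hdisj2, Finset.card_union_of_disjoint hdisj,
        hS1c, hS2c, Finset.card_insert_of_notMem (by simpa using habne),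
        Finset.card_singleton]
    have hfin := Finset.card_le_card hsub
    rw [hcard2, Finset.card_range] at hfin
    omega
  · -- all horizontal edges at the same height: peak argument
    push_neg at hA
    by_cases hH : ∃ k, k < n ∧ J (k+1) = J k
    · obtain ⟨k0, hk0, hh0⟩ := hH
      refine s9_peak n h3 I J (J k0) hIc hJc ?_ hinj
      intro k hk
      rcases hstep k hk with h | ⟨h1, _, h3'⟩
      · exact Or.inl h
      · refine Or.inr ⟨h1, ?_, h3'⟩
        have u1 := hA k hk k0 hk0 h1 hh0
        have u2 := hA k0 hk0 k hk hh0 h1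
        omega
    · push_neg at hH
      refine s9_peak n h3 I J 0 hIc hJc ?_ hinj
      intro k hk
      rcases hstep k hk with h | ⟨h1, _, _⟩
      · exact Or.inl h
      · exact absurd h1 (hH k hk)
end
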